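/- Let (Ω, F, μ) be a probability space, let n be a positive integer, and let x_1,…,x_n : Ω → {0,1} be random variables with expectations E[x_i] = y_i. Suppose the complements are upper negatively correlated, i.e., for every subset S ⊆ {1,…,n}, E[ Π_{i∈S} (1 − x_i) ] ≤ Π_{i∈S} (1 − y_i). Then for every vector of weights w ∈ [0,1]^n and every subset S ⊆ {1,…,n}, E[ Π_{i∈S} (1 − w_i·x_i) ] ≤ Π_{i∈S} (1 − w_i·y_i). -/
import Mathlib


open MeasureTheory

/-- Weighted negative correlation (Appendix E of the paper): if `{0,1}`-valued random
variables have negatively correlated complements, the weighted variables `w i * x i`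
inherit the product-expectation inequality. -/
theorem weighted_negative_correlation
    (Ω : Type*) [MeasurableSpace Ω] (μ : Measure Ω) [IsProbabilityMeasure μ]
    (n : ℕ) (hn : 0 < n)
    (x : Fin n → Ω → ℝ) (hmeas : ∀ i, Measurable (x i))
    (hbin : ∀ i ω, x i ω = 0 ∨ x i ω = 1)
    (y : Fin n → ℝ) (hy : ∀ i, (∫ ω, x i ω ∂μ) = y i)
    (hneg : ∀ S : Finset (Fin n),
      (∫ ω, ∏ i ∈ S, (1 - x i ω) ∂μ) ≤ ∏ i ∈ S, (1 - y i))
    (w : Fin n → ℝ) (hw : ∀ i, w i ∈ Set.Icc (0 : ℝ) 1)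
    (S : Finset (Fin n)) :
    (∫ ω, ∏ i ∈ S, (1 - w i * x i ω) ∂μ) ≤ ∏ i ∈ S, (1 - w i * y i) := by
  -- pointwise expansion
  have key : ∀ ω, ∏ i ∈ S, (1 - w i * x i ω)
      = ∑ T ∈ S.powerset,
          (∏ i ∈ T, w i) * (∏ i ∈ T, (1 - x i ω)) * ∏ i ∈ S \ T, (1 - w i) := by
    intro ω
    have h1 : ∏ i ∈ S, (1 - w i * x i ω)
        = ∏ i ∈ S, (w i * (1 - x i ω) + (1 - w i)) :=
      Finset.prod_congr rfl (fun i _ => by ring)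
    rw [h1, Finset.prod_add]
    refine Finset.sum_congr rfl (fun T _ => ?_)
    rw [Finset.prod_mul_distrib]
  -- integrability of the complement products
  have hPint : ∀ T : Finset (Fin n),
      Integrable (fun ω => ∏ i ∈ T, (1 - x i ω)) μ := by
    intro T
    have hm : Measurable (fun ω => ∏ i ∈ T, (1 - x i ω)) :=
      Finset.measurable_prod _ (fun i _ => (measurable_const.sub (hmeas i)))
    refine (integrable_const (1 : ℝ)).mono' hm.aestronglyMeasurable ?_
    filter_upwards with ω
    have h0 : 0 ≤ ∏ i ∈ T, (1 - x i ω) :=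
      Finset.prod_nonneg (fun i _ => by rcases hbin i ω with h | h <;> rw [h] <;> norm_num)
    have h1 : ∏ i ∈ T, (1 - x i ω) ≤ 1 :=
      Finset.prod_le_one
        (fun i _ => by rcases hbin i ω with h | h <;> rw [h] <;> norm_num)
        (fun i _ => by rcases hbin i ω with h | h <;> rw [h] <;> norm_num)
    rw [Real.norm_eq_abs, abs_of_nonneg h0]
    simpa using h1
  have hint : ∀ T ∈ S.powerset,
      Integrable (fun ω =>
        (∏ i ∈ T, w i) * (∏ i ∈ T, (1 - x i ω)) * ∏ i ∈ S \ T, (1 - w i)) μ :=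
    fun T _ => (((hPint T).const_mul _).mul_const _)
  simp_rw [key]
  rw [integral_finset_sum _ hint]
  -- bound termwise and resum
  have hbound : ∀ T ∈ S.powerset,
      (∫ ω, (∏ i ∈ T, w i) * (∏ i ∈ T, (1 - x i ω)) * ∏ i ∈ S \ T, (1 - w i) ∂μ)
        ≤ (∏ i ∈ T, w i) * (∏ i ∈ T, (1 - y i)) * ∏ i ∈ S \ T, (1 - w i) := by
    intro T _
    rw [integral_mul_const, integral_const_mul]
    have hwpos : (0 : ℝ) ≤ ∏ i ∈ T, w i :=
      Finset.prod_nonneg (fun i _ => (hw i).1)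
    have hwpos' : (0 : ℝ) ≤ ∏ i ∈ S \ T, (1 - w i) :=
      Finset.prod_nonneg (fun i _ => by linarith [(hw i).2])
    have := hneg T
    nlinarith [mul_le_mul_of_nonneg_left this hwpos,
      mul_le_mul_of_nonneg_right
        (mul_le_mul_of_nonneg_left this hwpos) hwpos']
  calc (∑ T ∈ S.powerset, ∫ ω,
          (∏ i ∈ T, w i) * (∏ i ∈ T, (1 - x i ω)) * ∏ i ∈ S \ T, (1 - w i) ∂μ)
      ≤ ∑ T ∈ S.powerset,
          (∏ i ∈ T, w i) * (∏ i ∈ T, (1 - y i)) * ∏ i ∈ S \ T, (1 - w i) :=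
        Finset.sum_le_sum hbound
    _ = ∑ T ∈ S.powerset, (∏ i ∈ T, (w i * (1 - y i))) * ∏ i ∈ S \ T, (1 - w i) :=
        Finset.sum_congr rfl (fun T _ => by rw [Finset.prod_mul_distrib])
    _ = ∏ i ∈ S, (w i * (1 - y i) + (1 - w i)) :=
        (Finset.prod_add (fun i => w i * (1 - y i)) (fun i => 1 - w i) S).symm
    _ = ∏ i ∈ S, (1 - w i * y i) := Finset.prod_congr rfl (fun i _ => by ring)
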